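/- arXiv:0811.4712 — 6 statements merged into one kernel-verified Lean document; each statement's English description precedes it below -/
import Mathlib

section
/- The set of tree-expanded invertible series {A = Σ_{t∈Y} A_t t with A_| = 1}, with coefficients in a commutative unital ring and with multiplication induced linearly by the over product on trees, forms a group. -/
/-- Planar binary trees: a leaf, or an internal vertex with two subtrees. -/
inductive PBT : Type
  | leaf : PBT
  | node : PBT → PBT → PBT
  deriving DecidableEq

namespace PBT

/-- Number of internal vertices of a planar binary tree. -/
def size : PBT → ℕ
  | leaf => 0
  | node l r => size l + size r + 1

/-- `under u v` ("u ∖ v") grafts `v` at the rightmost leaf of `u`. -/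
def under : PBT → PBT → PBT
  | leaf, v => v
  | node l r, v => node l (under r v)

/-- `over u v` ("u / v") grafts `u` at the leftmost leaf of `v`. -/
def overGraft (u : PBT) : PBT → PBT
  | leaf => u
  | node l r => node (overGraft u l) r

/-- Number of internal vertices on the rightmost path (right spine). -/
def rightSpine : PBT → ℕ
  | leaf => 0
  | node _ r => rightSpine r + 1

/-- The left comb with `p` internal vertices. -/
def leftComb : ℕ → PBT
  | 0 => leaf
  | p + 1 => node (leftComb p) leaf

/-- The right comb with `q` internal vertices. -/
def rightComb : ℕ → PBT
  | 0 => leaf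
  | q + 1 => node leaf (rightComb q)

/-- The list of all factorizations `t = u ∖ v` (each exactly once). -/
def underFactors : PBT → List (PBT × PBT)
  | leaf => [(leaf, leaf)]
  | node l r => (leaf, node l r) :: (underFactors r).map (fun p => (node l p.1, p.2))

/-- The list of all factorizations `t = u / v` (each exactly once). -/
def overFactors : PBT → List (PBT × PBT)
  | leaf => [(leaf, leaf)]
  | node l r => (node l r, leaf) :: (overFactors l).map (fun p => (p.1, node p.2 r))

/-- Convolution of tree-expanded series dual to the over product:
`(A / B)_w = Σ_{s / t = w} A_s B_t`. -/
def overConv {R : Type*} [CommRing R] (f g : PBT → R) (w : PBT) : R :=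
  ((overFactors w).map (fun p => f p.1 * g p.2)).sum

/-- Convolution of tree-expanded series dual to the under product:
`(A ∖ B)_w = Σ_{s ∖ t = w} A_s B_t`. -/
def underConv {R : Type*} [CommRing R] (f g : PBT → R) (w : PBT) : R :=
  ((underFactors w).map (fun p => f p.1 * g p.2)).sum

/-- The list of all planar binary trees with `n` internal vertices. -/
def treesOfSize : ℕ → List PBT
  | 0 => [leaf]
  | n + 1 =>
    (List.range (n + 1)).attach.flatMap (fun i =>
      (treesOfSize i.1).flatMap (fun l =>
        (treesOfSize (n - i.1)).map (fun r => node l r)))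
  termination_by n => n
  decreasing_by
  · exact Nat.lt_succ_of_le (Nat.sub_le _ _)
  · exact List.mem_range.mp i.2

/-- `treePow B t` is the series `B^t = μ_t(B,…,B)`, the substitution of the
series `B` in all internal vertices of `t` (duplicial operad composition),
using the decomposition `l ∨ r = (l / Y) ∖ r`. -/
def treePow {R : Type*} [CommRing R] (B : PBT → R) : PBT → PBT → R
  | leaf => fun w => if w = leaf then 1 else 0
  | node l r => underConv (overConv (treePow B l) B) (treePow B r)

/-- Composition of tree-expanded series: `(A ∘ B)_w = Σ_t A_t (B^t)_w`,
where only trees with at most `|w|` vertices can contribute. -/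
def comp {R : Type*} [CommRing R] (A B : PBT → R) (w : PBT) : R :=
  (((List.range (size w + 1)).flatMap treesOfSize).map
    (fun t => A t * treePow B t w)).sum

/-- The series reduced to the one-vertex tree `Y`. -/
def Yser {R : Type*} [CommRing R] : PBT → R :=
  fun t => if t = node leaf leaf then 1 else 0

/-- The series reduced to the root tree `|` (unit for the over/under products). -/
def unitSer {R : Type*} [CommRing R] : PBT → R :=
  fun t => if t = leaf then 1 else 0

/-- Suspension of a tree-expanded series: the coefficient on a tree with `n`
internal vertices is multiplied by `(-1)^(n-1)`. -/
def susp {R : Type*} [CommRing R] (A : PBT → R) : PBT → R :=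
  fun t => (-1 : R) ^ (size t + 1) * A t

/-- One covering step of the Tamari order: a right rotation
`(a ∨ b) ∨ c ⟶ a ∨ (b ∨ c)` somewhere in the tree. -/
inductive TamariStep : PBT → PBT → Prop
  | rot (a b c : PBT) : TamariStep (node (node a b) c) (node a (node b c))
  | left {l l' : PBT} (r : PBT) : TamariStep l l' → TamariStep (node l r) (node l' r)
  | right (l : PBT) {r r' : PBT} : TamariStep r r' → TamariStep (node l r) (node l r')

/-- The Tamari partial order on planar binary trees. -/
def tle : PBT → PBT → Prop := Relation.ReflTransGen TamariStep

end PBT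

namespace PBTProof

open PBT

variable {R : Type*} [CommRing R]

lemma sum_map_mul_right {α : Type*} (l : List α) (f : α → R) (c : R) :
    (l.map f).sum * c = (l.map (fun x => f x * c)).sum := by
  induction l with
  | nil => simp
  | cons a t ih => simp [add_mul, ih]

lemma sum_map_mul_left {α : Type*} (l : List α) (f : α → R) (c : R) :
    c * (l.map f).sum = (l.map (fun x => c * f x)).sum := by
  induction l with
  | nil => simp
  | cons a t ih => simp [mul_add, ih]


lemma sum_map_add {α : Type*} (l : List α) (f g : α → R) :
    (l.map (fun x => f x + g x)).sum = (l.map f).sum + (l.map g).sum := by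
  induction l with
  | nil => simp
  | cons a t ih => simp [ih]; ring


lemma sum_attach {α : Type*} (l : List α) (f : α → R) :
    (l.attach.map (fun p => f p.1)).sum = (l.map f).sum := by
  rw [List.attach_map_val]

lemma mem_overFactors_size : ∀ (w : PBT) (p : PBT × PBT),
    p ∈ overFactors w → size p.1 + size p.2 = size w := by
  intro w
  induction w with
  | leaf => intro p hp; simp [overFactors] at hp; simp [hp, size]
  | node l r ihl ihr =>
    intro p hp
    simp only [overFactors, List.mem_cons, List.mem_map] at hp
    rcases hp with h | ⟨q, hq, rfl⟩
    · simp [h, size]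
    · have := ihl q hq
      simp [size]; omega

/-- Generalized associativity of the over-factorization sums. -/
lemma OF_assoc : ∀ (w : PBT) (F : PBT → PBT → PBT → R),
    ((overFactors w).map (fun p =>
        ((overFactors p.1).map (fun q => F q.1 q.2 p.2)).sum)).sum
      = ((overFactors w).map (fun p =>
        ((overFactors p.2).map (fun q => F p.1 q.1 q.2)).sum)).sum := by
  intro w
  induction w with
  | leaf => intro F; simp [overFactors]
  | node l r ihl ihr =>
    intro F
    simp only [overFactors, List.map_cons, List.sum_cons, List.map_map,
      Function.comp_def]
    have key := ihl (fun s t v => F s t (node v r))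
    rw [key, sum_map_add]
    simp [add_assoc]

lemma left_unit (l : PBT) : ∀ (G : PBT → R),
    ((overFactors l).map (fun p => unitSer p.1 * G p.2)).sum = G l := by
  induction l with
  | leaf => intro G; simp [overFactors, unitSer]
  | node a b iha ihb =>
    intro G
    simp only [overFactors, List.map_cons, List.sum_cons, List.map_map,
      Function.comp_def]
    rw [show (unitSer (node a b) : R) = 0 by simp [unitSer]]
    rw [iha (fun v => G (node v b))]
    ring

lemma overConv_leftUnit (A : PBT → R) : overConv unitSer A = A := by
  funext w
  exact left_unit w A

lemma overConv_rightUnit (A : PBT → R) : overConv A unitSer = A := by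
  funext w
  cases w with
  | leaf => simp [overConv, overFactors, unitSer]
  | node l r =>
    simp only [overConv, overFactors, List.map_cons, List.sum_cons,
      List.map_map, Function.comp_def]
    rw [show (unitSer leaf : R) = 1 by simp [unitSer]]
    have : ∀ p : PBT × PBT, A p.1 * unitSer (node p.2 r) = (0 : R) := by
      intro p; simp [unitSer]
    simp only [this]
    simp

lemma overConv_assoc (A B C : PBT → R) :
    overConv (overConv A B) C = overConv A (overConv B C) := by
  funext w
  have := OF_assoc w (fun s t v => A s * B t * C v)
  simp only [overConv]
  calc ((overFactors w).map (fun p => overConv A B p.1 * C p.2)).sum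
      = ((overFactors w).map (fun p =>
          ((overFactors p.1).map (fun q => A q.1 * B q.2 * C p.2)).sum)).sum := by
        apply congrArg; apply List.map_congr_left; intro p _
        simp only [overConv]
        rw [sum_map_mul_right]
    _ = ((overFactors w).map (fun p =>
          ((overFactors p.2).map (fun q => A p.1 * (B q.1 * C q.2))).sum)).sum := by
        rw [this]; apply congrArg; apply List.map_congr_left; intro p _
        apply congrArg; apply List.map_congr_left; intro q _; ring
    _ = ((overFactors w).map (fun p => A p.1 * overConv B C p.2)).sum := by
        apply congrArg; apply List.map_congr_left; intro p _
        simp only [overConv]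
        rw [sum_map_mul_left]

/-- The left inverse series, defined by recursion on size. -/
def invSer (A : PBT → R) : PBT → R
  | .leaf => 1
  | .node l r => - ((overFactors l).attach.map
      (fun p => invSer A p.1.1 * A (node p.1.2 r))).sum
termination_by t => size t
decreasing_by
  have := mem_overFactors_size l p.1 p.2
  simp only [size]
  omega

lemma invSer_leftInv (A : PBT → R) (hA : A PBT.leaf = 1) :
    overConv (invSer A) A = unitSer := by
  funext w
  cases w with
  | leaf => simp [overConv, overFactors, invSer, unitSer, hA]
  | node l r =>
    simp only [overConv, overFactors, List.map_cons, List.sum_cons,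
      List.map_map, Function.comp_def, hA, mul_one]
    rw [show invSer A (node l r) =
        - ((overFactors l).attach.map
          (fun p => invSer A p.1.1 * A (node p.1.2 r))).sum from by
        simp [invSer]]
    rw [show ((overFactors l).attach.map
          (fun p => invSer A p.1.1 * A (node p.1.2 r))).sum
        = ((overFactors l).map
          (fun p => invSer A p.1 * A (node p.2 r))).sum by
      exact sum_attach (overFactors l) (fun p => invSer A p.1 * A (node p.2 r))]
    simp [unitSer]

end PBTProof

open PBT in
/-- tree-expanded series with coefficient `1` on the root tree,
with the convolution induced by the over product, form a group: the product is
closed, associative, has the series `|` as unit, and every element has a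
two-sided inverse. -/
theorem group_of_over_series (R : Type*) [CommRing R] :
    (∀ A B : PBT → R, A PBT.leaf = 1 → B PBT.leaf = 1 →
      overConv A B PBT.leaf = 1) ∧
    (∀ A B C : PBT → R, overConv (overConv A B) C = overConv A (overConv B C)) ∧
    (∀ A : PBT → R, overConv (unitSer) A = A ∧ overConv A (unitSer) = A) ∧
    (∀ A : PBT → R, A PBT.leaf = 1 →
      ∃ B : PBT → R, B PBT.leaf = 1 ∧
        overConv A B = unitSer ∧ overConv B A = unitSer) := by
  refine ⟨?_, ?_, ?_, ?_⟩
  · intro A B hA hB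
    simp [overConv, overFactors, hA, hB]
  · exact PBTProof.overConv_assoc
  · intro A
    exact ⟨PBTProof.overConv_leftUnit A, PBTProof.overConv_rightUnit A⟩
  · intro A hA
    set B := PBTProof.invSer A with hBdef
    have hB1 : B PBT.leaf = 1 := by simp [hBdef, PBTProof.invSer]
    have hBA : overConv B A = unitSer := PBTProof.invSer_leftInv A hA
    set D := PBTProof.invSer B with hDdef
    have hDB : overConv D B = unitSer := PBTProof.invSer_leftInv B hB1
    have hDA : D = A := by
      calc D = overConv D unitSer := (PBTProof.overConv_rightUnit D).symm
        _ = overConv D (overConv B A) := by rw [hBA]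
        _ = overConv (overConv D B) A := (PBTProof.overConv_assoc D B A).symm
        _ = overConv unitSer A := by rw [hDB]
        _ = A := PBTProof.overConv_leftUnit A
    exact ⟨B, hB1, by rw [← hDA]; exact hDB, hBA⟩
end

section
/- The set of tree-expanded invertible series with unit constant term, under the convolution induced by the under product on trees, forms a group. -/
namespace PBT

variable {R : Type*} [CommRing R]

lemma mem_underFactors_size : ∀ {r : PBT} {p : PBT × PBT}, p ∈ underFactors r → p.2.size ≤ r.size := by
  intro r
  induction r with
  | leaf => intro p hp; simp [underFactors] at hp; simp [hp]
  | node l r ihl ihr =>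
    intro p hp
    simp [underFactors] at hp
    rcases hp with h | ⟨a, b, hab, h⟩
    · simp [h]
    · have := ihr hab
      subst h
      simp [size] at this ⊢
      omega

lemma underConv_leaf (A B : PBT → R) : underConv A B leaf = A leaf * B leaf := by
  simp [underConv, underFactors]

lemma underConv_node (A B : PBT → R) (l r : PBT) :
    underConv A B (node l r) =
      A leaf * B (node l r) + underConv (fun x => A (node l x)) B r := by
  simp [underConv, underFactors, List.map_map, Function.comp_def]

lemma underConv_add_left (f g C : PBT → R) (w : PBT) :
    underConv (fun x => f x + g x) C w = underConv f C w + underConv g C w := by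
  simp only [underConv, add_mul]
  induction (underFactors w) with
  | nil => simp
  | cons a t ih => simp [ih]; ring

lemma underConv_smul_left (c : R) (f C : PBT → R) (w : PBT) :
    underConv (fun x => c * f x) C w = c * underConv f C w := by
  simp only [underConv, mul_assoc]
  induction (underFactors w) with
  | nil => simp
  | cons a t ih => simp [ih]; ring

lemma underConv_unit_right (A : PBT → R) (w : PBT) : underConv A unitSer w = A w := by
  induction w generalizing A with
  | leaf => simp [underConv_leaf, unitSer]
  | node l r ihl ihr =>
    rw [underConv_node, ihr]
    simp [unitSer]

lemma underConv_unit_left (A : PBT → R) (w : PBT) : underConv unitSer A w = A w := by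
  induction w generalizing A with
  | leaf => simp [underConv_leaf, unitSer]
  | node l r ihl ihr =>
    rw [underConv_node]
    have h0 : (fun x => (unitSer : PBT → R) (node l x)) = fun _ => (0 : R) := by
      funext x; simp [unitSer]
    rw [h0]
    have : underConv (fun _ => (0 : R)) A r = 0 := by simp [underConv]
    simp [this, unitSer]

lemma underConv_assoc (A B C : PBT → R) (w : PBT) :
    underConv (underConv A B) C w = underConv A (underConv B C) w := by
  induction w generalizing A with
  | leaf => simp [underConv_leaf]; ring
  | node l r ihl ihr =>
    rw [underConv_node, underConv_node, underConv_node, underConv_leaf]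
    have h1 : (fun x => underConv A B (node l x)) =
        fun x => A leaf * B (node l x) + underConv (fun y => A (node l y)) B x := by
      funext x; rw [underConv_node]
    rw [h1, underConv_add_left, underConv_smul_left, ihr]
    ring

def rinv (A : PBT → R) : PBT → R
  | .leaf => 1
  | .node l r => -(((underFactors r).attach.map
      (fun p => A (.node l p.1.1) * rinv A p.1.2)).sum)
  termination_by w => w.size
  decreasing_by
    have := mem_underFactors_size p.2
    simp [size]
    omega

lemma rinv_leaf (A : PBT → R) : rinv A leaf = 1 := by simp [rinv]

lemma underConv_rinv (A : PBT → R) (hA : A leaf = 1) (w : PBT) :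
    underConv A (rinv A) w = unitSer w := by
  cases w with
  | leaf => simp [underConv_leaf, hA, rinv_leaf, unitSer]
  | node l r =>
    rw [underConv_node, hA]
    have : rinv A (node l r) = -(underConv (fun x => A (node l x)) (rinv A) r) := by
      rw [rinv]
      congr 1
      rw [underConv,
        ← List.attach_map_val (l := r.underFactors) (f := fun p => A (node l p.1) * rinv A p.2)]
    rw [this]
    simp [unitSer]

lemma underConv_assoc' (A B C : PBT → R) :
    underConv (underConv A B) C = underConv A (underConv B C) :=
  funext (underConv_assoc A B C)

lemma exists_inverse (A : PBT → R) (hA : A leaf = 1) :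
    ∃ B : PBT → R, B leaf = 1 ∧ underConv A B = unitSer ∧ underConv B A = unitSer := by
  refine ⟨rinv A, rinv_leaf A, funext (underConv_rinv A hA), ?_⟩
  set B := rinv A with hB
  have hB1 : B leaf = 1 := rinv_leaf A
  set C := rinv B with hC
  have hAB : underConv A B = unitSer := funext (underConv_rinv A hA)
  have hBC : underConv B C = unitSer := funext (underConv_rinv B hB1)
  calc underConv B A = underConv (underConv B A) unitSer := by
        funext w; rw [underConv_unit_right]
    _ = underConv (underConv B A) (underConv B C) := by rw [hBC]
    _ = underConv B (underConv A (underConv B C)) := underConv_assoc' B A _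
    _ = underConv B (underConv (underConv A B) C) := by rw [underConv_assoc' A B C]
    _ = underConv B (underConv unitSer C) := by rw [hAB]
    _ = underConv B C := by
        have h : underConv (unitSer : PBT → R) C = C := funext (underConv_unit_left C)
        rw [h]
    _ = unitSer := hBC

end PBT

open PBT in
/-- tree-expanded series with coefficient `1` on the root tree,
with the convolution induced by the under product, form a group. -/
theorem group_of_under_series (R : Type*) [CommRing R] :
    (∀ A B : PBT → R, A PBT.leaf = 1 → B PBT.leaf = 1 →
      underConv A B PBT.leaf = 1) ∧
    (∀ A B C : PBT → R, underConv (underConv A B) C = underConv A (underConv B C)) ∧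
    (∀ A : PBT → R, underConv (unitSer) A = A ∧ underConv A (unitSer) = A) ∧
    (∀ A : PBT → R, A PBT.leaf = 1 →
      ∃ B : PBT → R, B PBT.leaf = 1 ∧
        underConv A B = unitSer ∧ underConv B A = unitSer) := by
  refine ⟨fun A B hA hB => ?_, fun A B C => underConv_assoc' A B C, fun A => ?_, exists_inverse⟩
  · rw [underConv_leaf, hA, hB, one_mul]
  · exact ⟨funext (underConv_unit_left A), funext (underConv_unit_right A)⟩
end

section
/- The pruning coproduct Δ(t) = Σ_{t = u ∖ v} u ⊗ v makes the free associative algebra on planar binary trees with at least one internal vertex (with the root tree identified with the unit) a Hopf algebra; in particular Δ is coassociative. -/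
open PBT in
/-- The pruning coproduct `Δ(t) = Σ_{t = u ∖ v} u ⊗ v`, as an element of the
free module on pairs of trees. -/
noncomputable def pruningDelta (t : PBT) : (PBT × PBT) →₀ ℤ :=
  ((PBT.underFactors t).map (fun p => Finsupp.single p (1 : ℤ))).sum


namespace PruningAux

open PBT

/-- Multiset of triples from factoring the left factor further. -/
def trip1 (t : PBT) : Multiset (PBT × PBT × PBT) :=
  (underFactors t : Multiset (PBT × PBT)).bind
    (fun p => ((underFactors p.1 : Multiset (PBT × PBT))).map (fun q => (q.1, q.2, p.2)))

/-- Multiset of triples from factoring the right factor further. -/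
def trip2 (t : PBT) : Multiset (PBT × PBT × PBT) :=
  (underFactors t : Multiset (PBT × PBT)).bind
    (fun p => ((underFactors p.2 : Multiset (PBT × PBT))).map (fun q => (p.1, q.1, q.2)))

theorem trip_eq (t : PBT) : trip1 t = trip2 t := by
  induction t with
  | leaf => rfl
  | node l r ihl ihr =>
    have key : ((underFactors r : Multiset (PBT × PBT))).bind
        (fun p => ((underFactors p.1 : Multiset (PBT × PBT))).map
          (fun q => ((node l q.1 : PBT), q.2, p.2)))
        = ((underFactors r : Multiset (PBT × PBT))).bind
        (fun p => ((underFactors p.2 : Multiset (PBT × PBT))).map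
          (fun q => ((node l p.1 : PBT), q.1, q.2))) := by
      have h1 : ((underFactors r : Multiset (PBT × PBT))).bind
          (fun p => ((underFactors p.1 : Multiset (PBT × PBT))).map
            (fun q => ((node l q.1 : PBT), q.2, p.2)))
          = (trip1 r).map (fun x => ((node l x.1 : PBT), x.2)) := by
        rw [trip1, Multiset.map_bind]
        simp only [Multiset.map_map, Function.comp]
      have h2 : ((underFactors r : Multiset (PBT × PBT))).bind
          (fun p => ((underFactors p.2 : Multiset (PBT × PBT))).map
            (fun q => ((node l p.1 : PBT), q.1, q.2)))
          = (trip2 r).map (fun x => ((node l x.1 : PBT), x.2)) := by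
        rw [trip2, Multiset.map_bind]
        simp only [Multiset.map_map, Function.comp]
      rw [h1, h2, ihr]
    simp only [trip1, trip2, underFactors]
    simp only [← Multiset.cons_coe, ← Multiset.map_coe, Multiset.cons_bind,
      Multiset.bind_map, underFactors]
    simp only [← Multiset.cons_coe, ← Multiset.map_coe, Multiset.map_cons,
      Multiset.map_map, Function.comp, Multiset.bind_cons, Multiset.bind_zero,
      Multiset.map_zero]
    rw [key]
    simp [Multiset.cons_add, add_assoc]

theorem sum_listSingles {α : Type*} {M : Type*} [AddCommMonoid M] (L : List α)
    (h : α → ℤ → M) (h0 : ∀ p, h p 0 = 0)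
    (hadd : ∀ p a b, h p (a + b) = h p a + h p b) :
    ((L.map (fun p => Finsupp.single p (1 : ℤ))).sum).sum h
      = (L.map (fun p => h p 1)).sum := by
  induction L with
  | nil => simp
  | cons p L ih =>
    simp only [List.map_cons, List.sum_cons]
    rw [Finsupp.sum_add_index' h0 hadd, Finsupp.sum_single_index (h0 p), ih]

theorem sum_trip1 (t : PBT) :
    ((underFactors t).map (fun p => ((underFactors p.1).map
        (fun q => Finsupp.single ((q.1, q.2, p.2) : PBT × PBT × PBT) (1 : ℤ))).sum)).sum
      = ((trip1 t).map (fun x => Finsupp.single x (1 : ℤ))).sum := by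
  rw [trip1, Multiset.map_bind, Multiset.sum_bind]
  simp only [Multiset.map_map, Function.comp, Multiset.map_coe, Multiset.sum_coe,
    List.map_map, Function.comp_def]

theorem sum_trip2 (t : PBT) :
    ((underFactors t).map (fun p => ((underFactors p.2).map
        (fun q => Finsupp.single ((p.1, q.1, q.2) : PBT × PBT × PBT) (1 : ℤ))).sum)).sum
      = ((trip2 t).map (fun x => Finsupp.single x (1 : ℤ))).sum := by
  rw [trip2, Multiset.map_bind, Multiset.sum_bind]
  simp only [Multiset.map_map, Function.comp, Multiset.map_coe, Multiset.sum_coe,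
    List.map_map, Function.comp_def]

end PruningAux

open PBT in
/-- the pruning coproduct dual to the under product is
coassociative: `(Δ ⊗ id) ∘ Δ = (id ⊗ Δ) ∘ Δ` on every tree. -/
theorem pruningDelta_coassoc (t : PBT) :
    (pruningDelta t).sum (fun p c =>
      c • ((pruningDelta p.1).sum (fun q d =>
        Finsupp.single ((q.1, q.2, p.2) : PBT × PBT × PBT) d)))
    = (pruningDelta t).sum (fun p c =>
      c • ((pruningDelta p.2).sum (fun q d =>
        Finsupp.single ((p.1, q.1, q.2) : PBT × PBT × PBT) d))) := by
  have inner1 : ∀ p : PBT × PBT,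
      (pruningDelta p.1).sum (fun q d =>
          Finsupp.single ((q.1, q.2, p.2) : PBT × PBT × PBT) d)
        = ((underFactors p.1).map
            (fun q => Finsupp.single ((q.1, q.2, p.2) : PBT × PBT × PBT) (1 : ℤ))).sum := by
    intro p
    exact PruningAux.sum_listSingles _ _ (by simp) (by simp [Finsupp.single_add])
  have inner2 : ∀ p : PBT × PBT,
      (pruningDelta p.2).sum (fun q d =>
          Finsupp.single ((p.1, q.1, q.2) : PBT × PBT × PBT) d)
        = ((underFactors p.2).map
            (fun q => Finsupp.single ((p.1, q.1, q.2) : PBT × PBT × PBT) (1 : ℤ))).sum := by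
    intro p
    exact PruningAux.sum_listSingles _ _ (by simp) (by simp [Finsupp.single_add])
  simp only [inner1, inner2]
  rw [pruningDelta]
  rw [PruningAux.sum_listSingles _ _ (by intro p; simp) (by intro p a b; rw [add_smul]),
    PruningAux.sum_listSingles _ _ (by intro p; simp) (by intro p a b; rw [add_smul])]
  simp only [one_smul]
  rw [PruningAux.sum_trip1, PruningAux.sum_trip2, PruningAux.trip_eq]
end

section
/- The series A defined by A = Y + w(A/Y) + (Y∖A) + w(A/Y∖A) equals the sum over all planar binary trees t (with ≥1 vertex) of w^{r(t)−1} t, where r(t) is the number of right-oriented leaves of t. -/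
namespace PBT

/-- `overTree u v` ("u / v") grafts `u` at the leftmost leaf of `v`. -/
def overTree (u : PBT) : PBT → PBT
  | leaf => u
  | node l r => node (overTree u l) r

end PBT

open PBT in
/-- Number of right-oriented leaves of a planar binary tree. -/
def rightLeaves : PBT → ℕ
  | PBT.leaf => 0
  | PBT.node l PBT.leaf => rightLeaves l + 1
  | PBT.node l (PBT.node r1 r2) => rightLeaves l + rightLeaves (PBT.node r1 r2)

open PBT Polynomial

private lemma rightLeaves_pos : ∀ t : PBT, t ≠ PBT.leaf → 1 ≤ rightLeaves t
  | PBT.leaf, h => absurd rfl h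
  | PBT.node l PBT.leaf, _ => by simp [rightLeaves]
  | PBT.node l (PBT.node a b), _ => by
      have := rightLeaves_pos (PBT.node a b) (by simp)
      simp only [rightLeaves]
      omega

private lemma ov_sum (A : PBT → Polynomial ℚ) : ∀ u : PBT,
    ((overFactors u).map (fun p => A p.1 * Yser (PBT.node p.2 PBT.leaf))).sum = A u
  | PBT.leaf => by simp [overFactors, Yser]
  | PBT.node a b => by
      simp [overFactors, Yser, List.map_map, Function.comp_def]

private lemma overConv_Yser (A : PBT → Polynomial ℚ) (l r : PBT) :
    overConv A Yser (PBT.node l r) = if r = PBT.leaf then A l else 0 := by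
  rcases r with _ | ⟨a, b⟩
  · simp only [if_pos rfl, overConv, overFactors, List.map_cons, List.sum_cons,
      List.map_map]
    have h : ((fun p : PBT × PBT => A p.1 * Yser p.2) ∘
        (fun p : PBT × PBT => (p.1, PBT.node p.2 PBT.leaf)))
        = fun p : PBT × PBT => A p.1 * Yser (PBT.node p.2 PBT.leaf) := rfl
    rw [h, ov_sum]
    simp [Yser]
  · simp [overConv, overFactors, Yser, List.map_map, Function.comp_def]

private lemma underConv_Yser (A : PBT → Polynomial ℚ) (hA0 : A PBT.leaf = 0)
    (l r : PBT) :
    underConv Yser A (PBT.node l r) = if l = PBT.leaf then A r else 0 := by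
  rcases l with _ | ⟨c, d⟩
  · rcases r with _ | ⟨a, b⟩
    · simp [underConv, underFactors, Yser, hA0]
    · simp [underConv, underFactors, Yser, List.map_map, Function.comp_def]
  · simp [underConv, underFactors, Yser, List.map_map, Function.comp_def]

private lemma underConv_overConv (A : PBT → Polynomial ℚ) (hA0 : A PBT.leaf = 0)
    (l r : PBT) :
    underConv (overConv A Yser) A (PBT.node l r) = A l * A r := by
  have hleaf : overConv A Yser PBT.leaf = 0 := by simp [overConv, overFactors, Yser, hA0]
  have key : ∀ r : PBT, ((underFactors r).map
      (fun p => overConv A Yser (PBT.node l p.1) * A p.2)).sum = A l * A r := by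
    intro r
    rcases r with _ | ⟨c, d⟩
    · simp [underFactors, overConv_Yser, hA0]
    · simp [underFactors, overConv_Yser, List.map_map, Function.comp_def]
  show ((underFactors (PBT.node l r)).map _).sum = _
  simp only [underFactors, List.map_cons, List.sum_cons, List.map_map]
  rw [show ((fun p : PBT × PBT => overConv A Yser p.1 * A p.2) ∘
      (fun p : PBT × PBT => (PBT.node l p.1, p.2)))
      = fun p : PBT × PBT => overConv A Yser (PBT.node l p.1) * A p.2 from rfl]
  rw [key, hleaf]
  ring

open PBT Polynomial in
/-- the series `A = Y + w(A/Y) + (Y∖A) + w(A/Y∖A)` is the sum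
over all trees `t` with at least one vertex of `w^{r(t)-1} t`, where `r(t)`
is the number of right-oriented leaves of `t`. -/
theorem series_A_coefficients (A : PBT → Polynomial ℚ)
    (hA0 : A PBT.leaf = 0)
    (hA : ∀ t : PBT, A t = Yser t + X * overConv A Yser t + underConv Yser A t
        + X * underConv (overConv A Yser) A t) :
    ∀ t : PBT, t ≠ PBT.leaf → A t = X ^ (rightLeaves t - 1) := by
  intro t
  induction t with
  | leaf => intro h; exact absurd rfl h
  | node l r ihl ihr =>
    intro _
    have key : A (PBT.node l r) = Yser (PBT.node l r)
        + X * (if r = PBT.leaf then A l else 0)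
        + (if l = PBT.leaf then A r else 0)
        + X * (A l * A r) := by
      rw [hA (PBT.node l r), overConv_Yser, underConv_Yser A hA0,
        underConv_overConv A hA0]
    rcases l with _ | ⟨a, b⟩
    · rcases r with _ | ⟨c, d⟩
      · simp [key, Yser, hA0, rightLeaves]
      · have hr := ihr (by simp)
        have hpos := rightLeaves_pos (PBT.node c d) (by simp)
        simp only [key, Yser, hA0, rightLeaves, if_neg (by simp : PBT.node c d ≠ PBT.leaf),
          if_pos rfl, reduceCtorEq, if_false, mul_zero, zero_mul, add_zero, zero_add,
          if_neg (show PBT.node PBT.leaf (PBT.node c d) ≠ PBT.node PBT.leaf PBT.leaf by simp)]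
        rw [hr]
        congr 1
    · rcases r with _ | ⟨c, d⟩
      · have hl := ihl (by simp)
        have hpos := rightLeaves_pos (PBT.node a b) (by simp)
        simp only [key, Yser, hA0, rightLeaves, reduceCtorEq, if_false, if_pos rfl, if_true,
          mul_zero, zero_mul, add_zero, zero_add,
          if_neg (show PBT.node (PBT.node a b) PBT.leaf ≠ PBT.node PBT.leaf PBT.leaf by simp)]
        rw [hl, ← pow_succ']
        congr 1
        omega
      · have hl := ihl (by simp)
        have hr := ihr (by simp)
        have hposl := rightLeaves_pos (PBT.node a b) (by simp)
        have hposr := rightLeaves_pos (PBT.node c d) (by simp)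
        simp only [key, Yser, rightLeaves, reduceCtorEq, if_false,
          mul_zero, zero_mul, add_zero, zero_add,
          if_neg (show PBT.node (PBT.node a b) (PBT.node c d) ≠ PBT.node PBT.leaf PBT.leaf by simp)]
        rw [hl, hr, ← pow_add, ← pow_succ']
        congr 1
        omega
end

section
/- The series B defined by B = Y − w(Y/B) − (B∖Y) − w(Y/B∖Y) equals Σ_{p,q ≥ 0} (−1)^{p+q} w^p (c_p / Y ∖ d_q), where c_p is the left comb with p vertices and d_q is the right comb with q vertices. -/
namespace PBT

/-- `over u v` ("u / v") grafts `u` at the leftmost leaf of `v`. -/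
def overProd (u : PBT) : PBT → PBT
  | leaf => u
  | node l r => node (overProd u l) r

end PBT

namespace PBT

/-- Remove the leftmost-bottom vertex if it is a `Y` (partial inverse of `over Y ·`). -/
def stripLeft : PBT → Option PBT
  | leaf => none
  | node leaf leaf => some leaf
  | node leaf (node _ _) => none
  | node (node a b) r => (stripLeft (node a b)).map (fun v => node v r)

/-- Remove the rightmost-bottom vertex if it is a `Y` (partial inverse of `under · Y`). -/
def stripRight : PBT → Option PBT
  | leaf => none
  | node leaf leaf => some leaf
  | node (node _ _) leaf => none
  | node l (node a b) => (stripRight (node a b)).map (fun v => node l v)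

lemma overConv_step {R : Type*} [CommRing R] (l r : PBT) (f : PBT → R) :
    overConv Yser f (node l r)
      = Yser (node l r) * f leaf + overConv Yser (fun v => f (node v r)) l := by
  simp only [overConv, overFactors, List.map_cons, List.sum_cons, List.map_map]
  rfl

lemma underConv_step {R : Type*} [CommRing R] (l r : PBT) (f : PBT → R) :
    underConv f Yser (node l r)
      = f leaf * Yser (node l r) + underConv (fun u => f (node l u)) Yser r := by
  simp only [underConv, underFactors, List.map_cons, List.sum_cons, List.map_map]
  rfl

lemma overConv_Yser_eq {R : Type*} [CommRing R] (t : PBT) :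
    ∀ f : PBT → R, overConv Yser f t = (stripLeft t).elim 0 f := by
  induction t with
  | leaf => intro f; simp [overConv, overFactors, Yser, stripLeft]
  | node l r ihl ihr =>
    intro f
    rw [overConv_step]
    cases l with
    | leaf =>
      cases r with
      | leaf => simp [overConv, overFactors, Yser, stripLeft]
      | node a b => simp [overConv, overFactors, Yser, stripLeft]
    | node a b =>
      rw [ihl]
      have : Yser (node (node a b) r) = (0 : R) := by simp [Yser]
      rw [this]
      cases h : stripLeft (node a b) <;> simp [stripLeft, h]

lemma underConv_Yser_eq {R : Type*} [CommRing R] (t : PBT) :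
    ∀ f : PBT → R, underConv f Yser t = (stripRight t).elim 0 f := by
  induction t with
  | leaf => intro f; simp [underConv, underFactors, Yser, stripRight]
  | node l r ihl ihr =>
    intro f
    rw [underConv_step]
    cases r with
    | leaf =>
      cases l with
      | leaf => simp [underConv, underFactors, Yser, stripRight]
      | node a b => simp [underConv, underFactors, Yser, stripRight]
    | node a b =>
      rw [ihr]
      have : Yser (node l (node a b)) = (0 : R) := by simp [Yser]
      rw [this]
      cases h : stripRight (node a b) <;> simp [stripRight, h]

end PBT
namespace PBT

lemma stripLeft_size : ∀ t s : PBT, stripLeft t = some s → size t = size s + 1 := by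
  intro t
  induction t with
  | leaf => intro s h; simp [stripLeft] at h
  | node l r ihl ihr =>
    intro s h
    cases l with
    | leaf =>
      cases r with
      | leaf => simp [stripLeft] at h; subst h; simp [size]
      | node a b => simp [stripLeft] at h
    | node a b =>
      rw [stripLeft] at h
      cases h' : stripLeft (node a b) with
      | none => rw [h'] at h; simp at h
      | some v =>
        rw [h'] at h; simp at h; subst h
        have := ihl v h'
        simp [size] at this ⊢
        omega

lemma stripRight_size : ∀ t s : PBT, stripRight t = some s → size t = size s + 1 := by
  intro t
  induction t with
  | leaf => intro s h; simp [stripRight] at h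
  | node l r ihl ihr =>
    intro s h
    cases r with
    | leaf =>
      cases l with
      | leaf => simp [stripRight] at h; subst h; simp [size]
      | node a b => simp [stripRight] at h
    | node a b =>
      rw [stripRight] at h
      cases h' : stripRight (node a b) with
      | none => rw [h'] at h; simp at h
      | some v =>
        rw [h'] at h; simp at h; subst h
        have := ihr v h'
        simp [size] at this ⊢
        omega

lemma stripLeft_eq_some : ∀ t s : PBT, stripLeft t = some s → t = overProd (node leaf leaf) s := by
  intro t
  induction t with
  | leaf => intro s h; simp [stripLeft] at h
  | node l r ihl ihr =>
    intro s h
    cases l with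
    | leaf =>
      cases r with
      | leaf => simp [stripLeft] at h; subst h; rfl
      | node a b => simp [stripLeft] at h
    | node a b =>
      rw [stripLeft] at h
      cases h' : stripLeft (node a b) with
      | none => rw [h'] at h; simp at h
      | some v =>
        rw [h'] at h; simp at h; subst h
        have := ihl v h'
        simp [overProd, ← this]

lemma stripRight_eq_some : ∀ t s : PBT, stripRight t = some s → t = under s (node leaf leaf) := by
  intro t
  induction t with
  | leaf => intro s h; simp [stripRight] at h
  | node l r ihl ihr =>
    intro s h
    cases r with
    | leaf =>
      cases l with
      | leaf => simp [stripRight] at h; subst h; rfl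
      | node a b => simp [stripRight] at h
    | node a b =>
      rw [stripRight] at h
      cases h' : stripRight (node a b) with
      | none => rw [h'] at h; simp at h
      | some v =>
        rw [h'] at h; simp at h; subst h
        have := ihr v h'
        simp [under, ← this]

lemma over_Y_leftComb (p : ℕ) : overProd (node leaf leaf) (leftComb p) = leftComb (p + 1) := by
  induction p with
  | zero => rfl
  | succ p ih => show node (overProd (node leaf leaf) (leftComb p)) leaf = _; rw [ih]; rfl

lemma under_rightComb_Y (q : ℕ) : under (rightComb q) (node leaf leaf) = rightComb (q + 1) := by
  induction q with
  | zero => rfl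
  | succ q ih => show node leaf (under (rightComb q) (node leaf leaf)) = _; rw [ih]; rfl

lemma over_Y_comb (p q : ℕ) :
    overProd (node leaf leaf) (node (leftComb p) (rightComb q))
      = node (leftComb (p + 1)) (rightComb q) := by
  show node (overProd (node leaf leaf) (leftComb p)) (rightComb q) = _
  rw [over_Y_leftComb]

lemma under_comb_Y (p q : ℕ) :
    under (node (leftComb p) (rightComb q)) (node leaf leaf)
      = node (leftComb p) (rightComb (q + 1)) := by
  show node (leftComb p) (under (rightComb q) (node leaf leaf)) = _
  rw [under_rightComb_Y]

/-- Recognize left combs. -/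
def isLC : PBT → Option ℕ
  | leaf => some 0
  | node l leaf => (isLC l).map (· + 1)
  | node _ (node _ _) => none

/-- Recognize right combs. -/
def isRC : PBT → Option ℕ
  | leaf => some 0
  | node leaf r => (isRC r).map (· + 1)
  | node (node _ _) _ => none

lemma isLC_leftComb (p : ℕ) : isLC (leftComb p) = some p := by
  induction p with
  | zero => rfl
  | succ p ih => show (isLC (leftComb p)).map (· + 1) = _; rw [ih]; rfl

lemma isRC_rightComb (q : ℕ) : isRC (rightComb q) = some q := by
  induction q with
  | zero => rfl
  | succ q ih => show (isRC (rightComb q)).map (· + 1) = _; rw [ih]; rfl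

lemma isLC_some : ∀ t : PBT, ∀ p : ℕ, isLC t = some p → t = leftComb p := by
  intro t
  induction t with
  | leaf => intro p h; simp [isLC] at h; subst h; rfl
  | node l r ihl ihr =>
    intro p h
    cases r with
    | leaf =>
      rw [isLC] at h
      cases h' : isLC l with
      | none => rw [h'] at h; simp at h
      | some p' =>
        rw [h'] at h; simp at h
        rw [ihl p' h', ← h]
        rfl
    | node a b => simp [isLC] at h

lemma isRC_some : ∀ t : PBT, ∀ q : ℕ, isRC t = some q → t = rightComb q := by
  intro t
  induction t with
  | leaf => intro q h; simp [isRC] at h; subst h; rfl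
  | node l r ihl ihr =>
    intro q h
    cases l with
    | leaf =>
      rw [isRC] at h
      cases h' : isRC r with
      | none => rw [h'] at h; simp at h
      | some q' =>
        rw [h'] at h; simp at h
        rw [ihr q' h', ← h]
        rfl
    | node a b => simp [isRC] at h

open Polynomial in
/-- The candidate solution of the fixed-point equation. -/
noncomputable def Cser : PBT → Polynomial ℚ
  | leaf => 0
  | node l r =>
    match isLC l, isRC r with
    | some p, some q => (-1) ^ (p + q) * X ^ p
    | _, _ => 0

open Polynomial in
lemma Cser_comb (p q : ℕ) :
    Cser (node (leftComb p) (rightComb q)) = (-1) ^ (p + q) * X ^ p := by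
  rw [Cser, isLC_leftComb, isRC_rightComb]

lemma Cser_ne_zero {t : PBT} (h : Cser t ≠ 0) :
    ∃ p q : ℕ, t = node (leftComb p) (rightComb q) := by
  cases t with
  | leaf => simp [Cser] at h
  | node l r =>
    rw [Cser] at h
    cases h1 : isLC l with
    | none => rw [h1] at h; simp at h
    | some p =>
      cases h2 : isRC r with
      | none => rw [h1, h2] at h; simp at h
      | some q => exact ⟨p, q, by rw [isLC_some l p h1, isRC_some r q h2]⟩

end PBT
namespace PBT

lemma stripLeft_node_comb : ∀ p r, stripLeft (node (leftComb (p + 1)) r)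
    = some (node (leftComb p) r) := by
  intro p
  induction p with
  | zero => intro r; rfl
  | succ p ih =>
    intro r
    show stripLeft (node (node (leftComb (p + 1)) leaf) r) = some (node (node (leftComb p) leaf) r)
    rw [stripLeft, ih leaf]
    rfl

lemma stripRight_node_comb : ∀ q l, stripRight (node l (rightComb (q + 1)))
    = some (node l (rightComb q)) := by
  intro q
  induction q with
  | zero => intro l; simp [rightComb, stripRight]
  | succ q ih =>
    intro l
    show stripRight (node l (node leaf (rightComb (q + 1)))) = some (node l (node leaf (rightComb q)))
    rw [stripRight, ih leaf]
    rfl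

open Polynomial in
lemma Cser_rec (t : PBT) :
    Cser t = Yser t - X * (stripLeft t).elim 0 Cser - (stripRight t).elim 0 Cser
      - X * (stripRight t).elim 0 (fun u => (stripLeft u).elim 0 Cser) := by
  by_cases hc : ∃ p q : ℕ, t = node (leftComb p) (rightComb q)
  · obtain ⟨p, q, rfl⟩ := hc
    cases p with
    | zero =>
      cases q with
      | zero =>
        show Cser (node leaf leaf) = Yser (node leaf leaf)
          - X * (stripLeft (node leaf leaf)).elim 0 Cser
          - (stripRight (node leaf leaf)).elim 0 Cser
          - X * (stripRight (node leaf leaf)).elim 0 (fun u => (stripLeft u).elim 0 Cser)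
        have h1 : stripLeft (node leaf leaf) = some leaf := rfl
        have h2 : stripRight (node leaf leaf) = some leaf := rfl
        rw [h1, h2]
        simp [Cser, isLC, isRC, Yser, stripLeft]
      | succ q =>
        have h1 : stripLeft (node (leftComb 0) (rightComb (q + 1))) = none := rfl
        have h2 := stripRight_node_comb q (leftComb 0)
        rw [h1, h2]
        simp only [Option.elim_none, Option.elim_some]
        rw [Cser_comb, Cser_comb]
        have hY : Yser (node (leftComb 0) (rightComb (q + 1))) = (0 : Polynomial ℚ) := by
          simp [Yser, rightComb, leftComb]
        rw [hY]
        have h3 : (stripLeft (node (leftComb 0) (rightComb q))).elim 0 Cser = 0 := by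
          cases q with
          | zero => show (stripLeft (node leaf leaf)).elim 0 Cser = 0; simp [stripLeft, Cser]
          | succ q => show (stripLeft (node leaf (node leaf (rightComb q)))).elim 0 Cser = 0; rfl
        rw [h3]
        ring
    | succ p =>
      cases q with
      | zero =>
        have h1 := stripLeft_node_comb p (rightComb 0)
        have h2 : stripRight (node (leftComb (p + 1)) (rightComb 0)) = none := by
          show stripRight (node (node (leftComb p) leaf) leaf) = none; rfl
        rw [h1, h2]
        simp only [Option.elim_none, Option.elim_some]
        rw [Cser_comb, Cser_comb]
        have hY : Yser (node (leftComb (p + 1)) (rightComb 0)) = (0 : Polynomial ℚ) := by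
          simp [Yser, leftComb]
        rw [hY]
        ring
      | succ q =>
        have h1 := stripLeft_node_comb p (rightComb (q + 1))
        have h2 := stripRight_node_comb q (leftComb (p + 1))
        rw [h1, h2]
        simp only [Option.elim_none, Option.elim_some]
        have h3 := stripLeft_node_comb p (rightComb q)
        rw [h3]
        simp only [Option.elim_none, Option.elim_some]
        rw [Cser_comb, Cser_comb, Cser_comb, Cser_comb]
        have hY : Yser (node (leftComb (p + 1)) (rightComb (q + 1))) = (0 : Polynomial ℚ) := by
          simp [Yser, leftComb]
        rw [hY]
        ring
  · push_neg at hc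
    have h0 : Cser t = 0 := by
      by_contra h
      obtain ⟨p, q, hh⟩ := Cser_ne_zero h
      exact hc p q hh
    have hY : Yser t = (0 : Polynomial ℚ) := by
      have h00 := hc 0 0
      simp only [leftComb, rightComb] at h00
      simp [Yser, h00]
    have h2 : (stripLeft t).elim 0 Cser = 0 := by
      cases h : stripLeft t with
      | none => rfl
      | some s =>
        simp only [Option.elim_none, Option.elim_some]
        by_contra hs
        obtain ⟨p, q, rfl⟩ := Cser_ne_zero hs
        exact hc (p + 1) q (by rw [stripLeft_eq_some t _ h, over_Y_comb])
    have h3 : (stripRight t).elim 0 Cser = 0 := by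
      cases h : stripRight t with
      | none => rfl
      | some s =>
        simp only [Option.elim_none, Option.elim_some]
        by_contra hs
        obtain ⟨p, q, rfl⟩ := Cser_ne_zero hs
        exact hc p (q + 1) (by rw [stripRight_eq_some t _ h, under_comb_Y])
    have h4 : (stripRight t).elim 0 (fun u => (stripLeft u).elim 0 Cser) = 0 := by
      cases h : stripRight t with
      | none => rfl
      | some u =>
        simp only [Option.elim_none, Option.elim_some]
        cases h' : stripLeft u with
        | none => rfl
        | some s =>
          simp only [Option.elim_none, Option.elim_some]
          by_contra hs
          obtain ⟨p, q, rfl⟩ := Cser_ne_zero hs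
          have hu : u = node (leftComb (p + 1)) (rightComb q) := by
            rw [stripLeft_eq_some u _ h', over_Y_comb]
          have ht : t = node (leftComb (p + 1)) (rightComb (q + 1)) := by
            rw [stripRight_eq_some t u h, hu, under_comb_Y]
          exact hc (p + 1) (q + 1) ht
    rw [h0, hY, h2, h3, h4]
    ring

end PBT
open PBT Polynomial in
/-- the series `B = Y - w(Y/B) - (B∖Y) - w(Y/B∖Y)` equals
`Σ_{p,q ≥ 0} (-1)^{p+q} w^p (c_p / Y ∖ d_q)`, where `c_p` is the left comb
with `p` vertices and `d_q` the right comb with `q` vertices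
(note `c_p / Y ∖ d_q = node c_p d_q`). -/
theorem series_B_coefficients (B : PBT → Polynomial ℚ)
    (hB0 : B PBT.leaf = 0)
    (hB : ∀ t : PBT, B t = Yser t - X * overConv Yser B t - underConv B Yser t
        - X * underConv (overConv Yser B) Yser t) :
    (∀ p q : ℕ,
      B (under (overProd (leftComb p) (PBT.node PBT.leaf PBT.leaf)) (rightComb q))
        = (-1 : Polynomial ℚ) ^ (p + q) * X ^ p) ∧
    (∀ t : PBT,
      (∀ p q : ℕ,
        t ≠ under (overProd (leftComb p) (PBT.node PBT.leaf PBT.leaf)) (rightComb q)) →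
      B t = 0) := by
  have key : ∀ n : ℕ, ∀ t : PBT, size t ≤ n → B t = Cser t := by
    intro n
    induction n with
    | zero =>
      intro t ht
      have hleaf : t = PBT.leaf := by
        cases t with
        | leaf => rfl
        | node l r => simp [size] at ht
      subst hleaf
      rw [hB0]
      rfl
    | succ n ih =>
      intro t ht
      rw [hB t, overConv_Yser_eq, underConv_Yser_eq, underConv_Yser_eq]
      have e1 : (stripLeft t).elim 0 B = (stripLeft t).elim 0 Cser := by
        cases h : stripLeft t with
        | none => rfl
        | some s =>
          simp only [Option.elim_some]
          exact ih s (by have := stripLeft_size t s h; omega)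
      have e2 : (stripRight t).elim 0 B = (stripRight t).elim 0 Cser := by
        cases h : stripRight t with
        | none => rfl
        | some s =>
          simp only [Option.elim_some]
          exact ih s (by have := stripRight_size t s h; omega)
      have e3 : (stripRight t).elim 0 (overConv Yser B)
          = (stripRight t).elim 0 (fun u => (stripLeft u).elim 0 Cser) := by
        cases h : stripRight t with
        | none => rfl
        | some u =>
          simp only [Option.elim_some]
          rw [overConv_Yser_eq]
          cases h' : stripLeft u with
          | none => rfl
          | some s =>
            simp only [Option.elim_some]
            have hu := stripRight_size t u h
            have hs := stripLeft_size u s h'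
            exact ih s (by omega)
      rw [e1, e2, e3]
      exact (Cser_rec t).symm
  have comb_eq : ∀ p q : ℕ,
      under (overProd (leftComb p) (PBT.node PBT.leaf PBT.leaf)) (rightComb q)
        = PBT.node (leftComb p) (rightComb q) := by
    intro p q
    rfl
  constructor
  · intro p q
    rw [comb_eq, key (size (PBT.node (leftComb p) (rightComb q))) _ le_rfl, Cser_comb]
  · intro t ht
    rw [key (size t) t le_rfl]
    by_contra h
    obtain ⟨p, q, rfl⟩ := Cser_ne_zero h
    exact ht p q (comb_eq p q).symm
end

section
/- The series E defined by E = Y + E/Y − E∖Y equals Σ_{n≥1} Σ_{t∈Y_n} μ(c_n, t) t, where μ is the Möbius function of the Tamari lattice on Y_n and c_n is the left comb (the minimum of the Tamari lattice). -/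
namespace PBT

/-- The one-vertex tree. -/
abbrev Ysh : PBT := node leaf leaf

/-- Left subtree of the last (bottom-right-spine) internal vertex. -/
def lastLeft : PBT → PBT
  | leaf => leaf
  | node l leaf => l
  | node _ (node a b) => lastLeft (node a b)

/-- Remove the last (bottom-right-spine) internal vertex. -/
def removeLast : PBT → PBT
  | leaf => leaf
  | node l leaf => l
  | node l (node a b) => node l (removeLast (node a b))

/-- Total left-subtree weight, strictly decreasing along Tamari steps. -/
def lw : PBT → ℕ
  | leaf => 0
  | node l r => lw l + lw r + size l

@[simp] lemma lastLeft_node_leaf (l : PBT) : lastLeft (node l leaf) = l := rfl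
@[simp] lemma lastLeft_node_node (l a b : PBT) :
    lastLeft (node l (node a b)) = lastLeft (node a b) := rfl
@[simp] lemma removeLast_node_leaf (l : PBT) : removeLast (node l leaf) = l := rfl
@[simp] lemma removeLast_node_node (l a b : PBT) :
    removeLast (node l (node a b)) = node l (removeLast (node a b)) := rfl

lemma size_removeLast : ∀ t : PBT, t ≠ leaf → size (removeLast t) + 1 = size t
  | leaf, h => absurd rfl h
  | node l leaf, _ => by simp [size]
  | node l (node a b), _ => by
      have := size_removeLast (node a b) (by simp)
      simp only [size] at this
      simp only [removeLast_node_node, size]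
      omega

lemma under_removeLast : ∀ t : PBT, t ≠ leaf → lastLeft t = leaf →
    under (removeLast t) Ysh = t
  | leaf, h, _ => absurd rfl h
  | node l leaf, _, h2 => by
      simp only [lastLeft_node_leaf] at h2
      subst h2; rfl
  | node l (node a b), _, h2 => by
      simp only [lastLeft_node_node] at h2
      have := under_removeLast (node a b) (by simp) h2
      simp only [removeLast_node_node, under]
      rw [this]

lemma removeLast_under : ∀ l : PBT, removeLast (under l Ysh) = l
  | leaf => rfl
  | node a leaf => rfl
  | node a (node x y) => by
      have := removeLast_under (node x y)
      simp only [under] at this ⊢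
      cases h : under y Ysh with
      | leaf => cases y <;> simp [under] at h
      | node u v =>
          rw [h] at this
          simp only [removeLast_node_node] at this ⊢
          rw [this]

lemma lastLeft_under : ∀ l : PBT, lastLeft (under l Ysh) = leaf
  | leaf => rfl
  | node a leaf => rfl
  | node a (node x y) => by
      have := lastLeft_under (node x y)
      simp only [under] at this ⊢
      cases h : under y Ysh with
      | leaf => cases y <;> simp [under] at h
      | node u v =>
          rw [h] at this
          simpa using this

lemma under_ne_leaf : ∀ l : PBT, under l Ysh ≠ leaf
  | leaf => by simp [under]
  | node a b => by simp [under]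

lemma size_under : ∀ l : PBT, size (under l Ysh) = size l + 1
  | leaf => rfl
  | node a b => by
      have := size_under b
      simp [under, size, this]; omega

lemma size_eq_zero_iff : ∀ t : PBT, size t = 0 ↔ t = leaf
  | leaf => by simp [size]
  | node l r => by simp [size]

lemma step_size {s t : PBT} (h : TamariStep s t) : size s = size t := by
  induction h with
  | rot a b c => simp [size]; omega
  | left r h ih => simp [size, ih]
  | right l h ih => simp [size, ih]

lemma step_lw {s t : PBT} (h : TamariStep s t) : lw t < lw s := by
  induction h with
  | rot a b c => simp [lw, size]; omega
  | left r h ih =>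
      have := step_size h
      simp [lw, this]; omega
  | right l h ih => simp [lw]; omega

lemma tle_size {s t : PBT} (h : tle s t) : size s = size t := by
  induction h with
  | refl => rfl
  | tail _ h ih => exact ih.trans (step_size h)

lemma tle_lw {s t : PBT} (h : tle s t) : s = t ∨ lw t < lw s := by
  induction h with
  | refl => exact Or.inl rfl
  | tail _ h ih =>
      rcases ih with rfl | ih
      · exact Or.inr (step_lw h)
      · exact Or.inr ((step_lw h).trans ih)

lemma tle_refl (t : PBT) : tle t t := Relation.ReflTransGen.refl

lemma tle_trans {s t u : PBT} (h1 : tle s t) (h2 : tle t u) : tle s u :=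
  Relation.ReflTransGen.trans h1 h2

lemma tle_antisymm {s t : PBT} (h1 : tle s t) (h2 : tle t s) : s = t := by
  rcases tle_lw h1 with rfl | h1'
  · rfl
  rcases tle_lw h2 with rfl | h2'
  · rfl
  omega

end PBT

namespace PBT

lemma tle_node_left {l l' : PBT} (r : PBT) (h : tle l l') :
    tle (node l r) (node l' r) :=
  Relation.ReflTransGen.lift (fun x => node x r) (fun _ _ hs => TamariStep.left r hs) _ _ h

lemma tle_node_right (l : PBT) {r r' : PBT} (h : tle r r') :
    tle (node l r) (node l r') :=
  Relation.ReflTransGen.lift (fun x => node l x) (fun _ _ hs => TamariStep.right l hs) _ _ h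

lemma step_under {l l' : PBT} (h : TamariStep l l') :
    TamariStep (under l Ysh) (under l' Ysh) := by
  induction h with
  | rot a b c =>
      show TamariStep (node (node a b) (under c Ysh)) (node a (node b (under c Ysh)))
      exact TamariStep.rot a b (under c Ysh)
  | left r h ih => exact TamariStep.left (under r Ysh) h
  | right l h ih => exact TamariStep.right l ih

lemma tle_under {l l' : PBT} (h : tle l l') : tle (under l Ysh) (under l' Ysh) :=
  Relation.ReflTransGen.lift (fun x => under x Ysh) (fun _ _ hs => step_under hs) _ _ h

lemma step_src_node {s t : PBT} (h : TamariStep s t) : ∃ a b, s = node a b := by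
  cases h <;> exact ⟨_, _, rfl⟩

lemma step_tgt_node {s t : PBT} (h : TamariStep s t) : ∃ a b, t = node a b := by
  cases h <;> exact ⟨_, _, rfl⟩

lemma step_removeLast {z z' : PBT} (h : TamariStep z z') :
    tle (removeLast z) (removeLast z') := by
  induction h with
  | rot a b c =>
      cases c with
      | leaf => exact tle_refl _
      | node x y =>
          exact Relation.ReflTransGen.single (TamariStep.rot a b (removeLast (node x y)))
  | left r h ih =>
      cases r with
      | leaf => exact Relation.ReflTransGen.single h
      | node x y =>
          simp only [removeLast_node_node]
          exact tle_node_left _ (Relation.ReflTransGen.single h)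
  | right l h ih =>
      obtain ⟨a, b, rfl⟩ := step_src_node h
      obtain ⟨c, d, rfl⟩ := step_tgt_node h
      simp only [removeLast_node_node]
      exact tle_node_right l ih

lemma tle_removeLast {z z' : PBT} (h : tle z z') :
    tle (removeLast z) (removeLast z') := by
  induction h with
  | refl => exact tle_refl _
  | tail _ hs ih => exact tle_trans ih (step_removeLast hs)

lemma step_lastLeft {z z' : PBT} (h : TamariStep z z') (hl : lastLeft z = leaf) :
    lastLeft z' = leaf := by
  induction h with
  | rot a b c =>
      cases c with
      | leaf => simp at hl
      | node x y => simpa using hl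
  | left r h ih =>
      cases r with
      | leaf =>
          obtain ⟨a, b, rfl⟩ := step_src_node h
          simp at hl
      | node x y => simpa using hl
  | right l h ih =>
      obtain ⟨a, b, rfl⟩ := step_src_node h
      obtain ⟨c, d, rfl⟩ := step_tgt_node h
      simp only [lastLeft_node_node] at hl ⊢
      exact ih hl

lemma tle_lastLeft {z z' : PBT} (h : tle z z') (hl : lastLeft z = leaf) :
    lastLeft z' = leaf := by
  induction h with
  | refl => exact hl
  | tail _ hs ih => exact step_lastLeft hs ih

@[simp] lemma size_leftComb : ∀ n, size (leftComb n) = n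
  | 0 => rfl
  | n + 1 => by simp [leftComb, size, size_leftComb n]

lemma leftComb_ne_leaf (n : ℕ) : leftComb (n + 1) ≠ leaf := by
  simp [leftComb]

lemma comb_le (p : ℕ) : ∀ q, tle (leftComb (p + q + 1)) (node (leftComb p) (leftComb q))
  | 0 => by
      show tle (leftComb (p + 1)) _
      exact tle_refl _
  | q + 1 => by
      have h1 : leftComb (p + (q + 1) + 1) = node (leftComb (p + q + 1)) leaf := by
        show leftComb (p + q + 1 + 1) = _
        rfl
      rw [h1]
      have h2 : tle (node (leftComb (p + q + 1)) leaf)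
          (node (node (leftComb p) (leftComb q)) leaf) :=
        tle_node_left leaf (comb_le p q)
      refine tle_trans h2 ?_
      exact Relation.ReflTransGen.single (TamariStep.rot (leftComb p) (leftComb q) leaf)

lemma leftComb_le : ∀ t : PBT, tle (leftComb (size t)) t
  | leaf => tle_refl _
  | node l r => by
      have h1 : tle (leftComb (size (node l r))) (node (leftComb (size l)) (leftComb (size r))) := by
        show tle (leftComb (size l + size r + 1)) _
        exact comb_le (size l) (size r)
      exact tle_trans h1 (tle_trans (tle_node_left _ (leftComb_le l))
        (tle_node_right _ (leftComb_le r)))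

lemma node_removeLast_le : ∀ t : PBT, t ≠ leaf → tle (node (removeLast t) leaf) t
  | leaf, h => absurd rfl h
  | node c leaf, _ => tle_refl _
  | node c (node x y), _ => by
      simp only [removeLast_node_node]
      refine tle_trans (Relation.ReflTransGen.single
        (TamariStep.rot c (removeLast (node x y)) leaf)) ?_
      exact tle_node_right c (node_removeLast_le (node x y) (by simp))

lemma le_node_leaf_iff {l t : PBT} (ht : t ≠ leaf) :
    tle (node l leaf) t ↔ tle l (removeLast t) := by
  constructor
  · intro h
    have := tle_removeLast h
    simpa using this
  · intro h
    exact tle_trans (tle_node_left leaf h) (node_removeLast_le t ht)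

lemma le_under_iff {u t : PBT} (ht : t ≠ leaf) :
    tle (under u Ysh) t ↔ tle u (removeLast t) ∧ lastLeft t = leaf := by
  constructor
  · intro h
    refine ⟨?_, tle_lastLeft h (lastLeft_under u)⟩
    have := tle_removeLast h
    rwa [removeLast_under] at this
  · rintro ⟨h1, h2⟩
    have := tle_under h1
    rwa [under_removeLast t ht h2] at this

end PBT

namespace PBT

/-- coefficient extraction for `overConv · Yser`. -/
def ovf (f : PBT → ℤ) : PBT → ℤ
  | node l leaf => f l
  | _ => 0

@[simp] lemma ovf_node_leaf (f : PBT → ℤ) (l : PBT) : ovf f (node l leaf) = f l := rfl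
@[simp] lemma ovf_leaf (f : PBT → ℤ) : ovf f leaf = 0 := rfl
@[simp] lemma ovf_node_node (f : PBT → ℤ) (l a b : PBT) : ovf f (node l (node a b)) = 0 := rfl

@[simp] lemma Yser_leaf : (Yser leaf : ℤ) = 0 := by simp [Yser]

lemma overFactors_snd_sum (f : PBT → ℤ) :
    ∀ l : PBT, ((overFactors l).map
      (fun p => f p.1 * (if p.2 = leaf then (1 : ℤ) else 0))).sum = f l := by
  intro l
  cases l with
  | leaf => simp [overFactors]
  | node a b =>
      rw [overFactors, List.map_cons, List.sum_cons, List.map_map]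
      have h0 : ((overFactors a).map ((fun p => f p.1 * (if p.2 = leaf then (1:ℤ) else 0)) ∘
          (fun p : PBT × PBT => (p.1, node p.2 b)))).sum = 0 := by
        apply List.sum_eq_zero
        intro x hx
        simp only [List.mem_map] at hx
        obtain ⟨p, hp, hpx⟩ := hx
        rw [← hpx]
        simp
      rw [h0]
      simp

lemma overConv_Yser_eq_s17 (f : PBT → ℤ) : ∀ z : PBT, overConv f Yser z = ovf f z := by
  intro z
  cases z with
  | leaf => simp [overConv, overFactors]
  | node l r =>
      cases r with
      | leaf =>
          simp only [overConv, overFactors, List.map_cons, List.sum_cons, Yser_leaf, mul_zero,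
            zero_add, List.map_map, ovf_node_leaf]
          have := overFactors_snd_sum f l
          rw [← this]
          congr 1
          apply List.map_congr_left
          intro p _
          simp only [Function.comp_apply, Yser]
          congr 1
          by_cases h : p.2 = leaf <;> simp [h]
      | node x y =>
          simp only [overConv, overFactors, List.map_cons, List.sum_cons, Yser_leaf, mul_zero,
            zero_add, List.map_map, ovf_node_node]
          apply List.sum_eq_zero
          intro a ha
          simp only [List.mem_map] at ha
          obtain ⟨p, hp, rfl⟩ := ha
          simp [Yser]

lemma underConv_Yser_eq_s17 (f : PBT → ℤ) : ∀ z : PBT,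
    underConv f Yser z =
      if lastLeft z = leaf ∧ z ≠ leaf then f (removeLast z) else 0 := by
  have main : ∀ z : PBT, ∀ f : PBT → ℤ,
      underConv f Yser z =
        if lastLeft z = leaf ∧ z ≠ leaf then f (removeLast z) else 0 := by
    intro z
    induction z with
    | leaf => intro f; simp [underConv, underFactors]
    | node l r ihl ihr =>
        intro f
        have hsplit : underConv f Yser (node l r) =
            f leaf * Yser (node l r) + underConv (fun x => f (node l x)) Yser r := by
          simp only [underConv, underFactors, List.map_cons, List.sum_cons, List.map_map]
          rfl
        rw [hsplit, ihr]
        cases r with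
        | leaf =>
            simp only [lastLeft_node_leaf, ne_eq, reduceCtorEq, not_false_eq_true, and_true]
            have : (Yser (node l leaf) : ℤ) = if l = leaf then 1 else 0 := by
              simp only [Yser]
              by_cases h : l = leaf <;> simp [h]
            rw [this]
            by_cases h : l = leaf
            · subst h; simp
            · simp [h]
        | node x y =>
            have h1 : (Yser (node l (node x y)) : ℤ) = 0 := by simp [Yser]
            rw [h1, mul_zero, zero_add]
            simp only [lastLeft_node_node, removeLast_node_node, ne_eq, reduceCtorEq,
              not_false_eq_true, and_true]
  exact fun z => main z f

lemma size_eq_one_iff : ∀ t : PBT, size t = 1 ↔ t = Ysh := by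
  intro t
  cases t with
  | leaf => simp [size]
  | node l r =>
      cases l <;> cases r <;> simp [size] <;> omega

lemma mem_treesOfSize : ∀ n : ℕ, ∀ t : PBT, t ∈ treesOfSize n ↔ size t = n := by
  intro n
  induction n using Nat.strong_induction_on with
  | _ n ih =>
      cases n with
      | zero =>
          intro t
          rw [treesOfSize]
          constructor
          · intro h; simp only [List.mem_singleton] at h; subst h; rfl
          · intro h; have := (size_eq_zero_iff t).mp h; subst this; simp
      | succ m =>
          intro t
          rw [treesOfSize]
          rw [List.mem_flatMap]
          constructor
          · rintro ⟨i, hi, hin⟩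
            rw [List.mem_flatMap] at hin
            obtain ⟨l, hl, hin2⟩ := hin
            rw [List.mem_map] at hin2
            obtain ⟨r, hr, hrt⟩ := hin2
            have hi' : i.1 < m + 1 := List.mem_range.mp i.2
            have hsl : size l = i.1 := (ih i.1 (by omega) l).mp hl
            have hsr : size r = m - i.1 := (ih (m - i.1) (by omega) r).mp hr
            rw [← hrt]
            simp only [size]
            omega
          · intro hst
            cases t with
            | leaf => exact absurd hst (by simp [size])
            | node l r =>
                simp only [size] at hst
                refine ⟨⟨size l, List.mem_range.mpr (by omega)⟩, List.mem_attach _ _, ?_⟩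
                rw [List.mem_flatMap]
                refine ⟨l, (ih (size l) (by omega) l).mpr rfl, ?_⟩
                rw [List.mem_map]
                exact ⟨r, (ih (m - size l) (by omega) r).mpr (by omega), rfl⟩

lemma nodup_treesOfSize : ∀ n : ℕ, (treesOfSize n).Nodup := by
  intro n
  induction n using Nat.strong_induction_on with
  | _ n ih =>
      cases n with
      | zero => rw [treesOfSize]; simp
      | succ m =>
          rw [treesOfSize]
          rw [List.nodup_flatMap]
          constructor
          · rintro ⟨i, hi⟩ -
            rw [List.nodup_flatMap]
            constructor
            · intro l _
              exact (ih (m - i) (by omega)).map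
                (fun r r' h => by injection h)
            · have hnd : (treesOfSize i).Nodup :=
                ih i (by have := List.mem_range.mp hi; omega)
              refine hnd.imp ?_
              intro a b hab
              intro x hx hy
              simp only [List.mem_map] at hx hy
              obtain ⟨r, _, rfl⟩ := hx
              obtain ⟨r', _, h⟩ := hy
              injection h with h1 h2
              exact hab h1.symm
          · have hnd : (List.range (m + 1)).attach.Nodup :=
              List.Nodup.attach List.nodup_range
            refine hnd.imp ?_
            rintro ⟨i, hi⟩ ⟨j, hj⟩ hij
            simp only [Function.onFun]
            intro x hx hy
            simp only [List.mem_flatMap, List.mem_map] at hx hy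
            obtain ⟨la, hla, ra, _, hxa⟩ := hx
            obtain ⟨lb, hlb, rb, _, hxb⟩ := hy
            rw [← hxa] at hxb
            injection hxb with h1 h2
            subst h1
            apply hij
            have e1 : size lb = i := (mem_treesOfSize i lb).mp hla
            have e2 : size lb = j := (mem_treesOfSize j lb).mp hlb
            exact Subtype.ext (e1.symm.trans e2)

end PBT

namespace PBT

/-- Trees of a given size, as a finset. -/
def Sn (n : ℕ) : Finset PBT := (treesOfSize n).toFinset

lemma mem_Sn {n : ℕ} {t : PBT} : t ∈ Sn n ↔ size t = n := by
  rw [Sn, List.mem_toFinset, mem_treesOfSize]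

lemma sum_reindex {F : PBT → ℤ} {g : PBT → PBT} {s t : Finset PBT}
    (hsub : ∀ u ∈ t, g u ∈ s)
    (hinj : ∀ u ∈ t, ∀ v ∈ t, g u = g v → u = v)
    (hzero : ∀ z ∈ s, (∀ u ∈ t, g u ≠ z) → F z = 0) :
    s.sum F = t.sum (fun u => F (g u)) := by
  rw [← Finset.sum_image hinj]
  apply (Finset.sum_subset ?_ ?_).symm
  · intro x hx
    rw [Finset.mem_image] at hx
    obtain ⟨u, hu, rfl⟩ := hx
    exact hsub u hu
  · intro x hxs hxni
    apply hzero x hxs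
    intro u hu hgux
    exact hxni (Finset.mem_image.mpr ⟨u, hu, hgux⟩)

lemma ne_leaf_of_size_pos {t : PBT} {n : ℕ} (h : size t = n + 1) : t ≠ leaf := by
  intro h'
  rw [h'] at h
  simp [size] at h

lemma removeLast_leftComb : ∀ t : PBT, lastLeft t ≠ leaf →
    ∀ m, removeLast t = leftComb m → t = leftComb (m + 1)
  | leaf, h, _, _ => absurd rfl h
  | node l leaf, h2, m, h3 => by
      simp only [removeLast_node_leaf] at h3
      simp [leftComb, h3]
  | node l (node x y), h2, m, h3 => by
      simp only [removeLast_node_node] at h3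
      cases m with
      | zero => simp [leftComb] at h3
      | succ m' =>
          simp only [leftComb] at h3
          injection h3 with hl hr
          exfalso
          cases y with
          | leaf =>
              simp only [removeLast_node_leaf] at hr
              subst hr
              exact h2 (by simp)
          | node a b => simp at hr

open Classical in
lemma E_Ysh {E : PBT → ℤ} (hE0 : E leaf = 0)
    (hE : ∀ t, E t = Yser t + overConv E Yser t - underConv E Yser t) :
    E Ysh = 1 := by
  have h := hE Ysh
  rw [overConv_Yser_eq_s17, underConv_Yser_eq_s17] at h
  simpa [Yser, hE0] using h

open Classical in
lemma E_leftComb {E : PBT → ℤ} (hE0 : E leaf = 0)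
    (hE : ∀ t, E t = Yser t + overConv E Yser t - underConv E Yser t) :
    ∀ n, E (leftComb (n + 1)) = 1 := by
  intro n
  induction n with
  | zero => exact E_Ysh hE0 hE
  | succ n ihn =>
      have h := hE (leftComb (n + 2))
      rw [overConv_Yser_eq_s17, underConv_Yser_eq_s17] at h
      have e1 : leftComb (n + 2) = node (leftComb (n + 1)) leaf := rfl
      rw [e1] at h ⊢
      simpa [Yser, leftComb_ne_leaf n, ihn] using h

open Classical in
lemma TSum {E : PBT → ℤ} (hE0 : E leaf = 0)
    (hE : ∀ t, E t = Yser t + overConv E Yser t - underConv E Yser t) :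
    ∀ n, ∀ t : PBT, size t = n → t ≠ leaf →
      ((Sn n).sum fun z => if tle z t then E z else 0) =
        if t = leftComb n then 1 else 0 := by
  intro n
  induction n using Nat.strong_induction_on with
  | _ n ih =>
    intro t hsz hne
    cases n with
    | zero => exact absurd ((size_eq_zero_iff t).mp hsz) hne
    | succ n' =>
      cases n' with
      | zero =>
          have ht1 : t = Ysh := (size_eq_one_iff t).mp hsz
          have hS1 : Sn 1 = {Ysh} := by
            ext z
            rw [mem_Sn, Finset.mem_singleton, size_eq_one_iff]
          subst ht1
          rw [hS1, Finset.sum_singleton, if_pos (tle_refl Ysh), E_Ysh hE0 hE]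
          have hYc : (Ysh : PBT) = leftComb 1 := rfl
          rw [if_pos hYc]
      | succ m =>
          have hrl_sz : size (removeLast t) = m + 1 := by
            have := size_removeLast t hne
            omega
          have hrl_ne : removeLast t ≠ leaf := ne_leaf_of_size_pos hrl_sz
          have hsplit : ∀ z ∈ Sn (m + 2), (if tle z t then E z else 0) =
              (if tle z t then ovf E z else 0) -
              (if tle z t then
                (if lastLeft z = leaf ∧ z ≠ leaf then E (removeLast z) else 0) else 0) := by
            intro z hz
            by_cases h : tle z t
            · rw [if_pos h, if_pos h, if_pos h, hE z, overConv_Yser_eq_s17, underConv_Yser_eq_s17]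
              have hzs : size z = m + 2 := mem_Sn.mp hz
              have hzY : z ≠ Ysh := by
                intro h'
                rw [h'] at hzs
                simp [size] at hzs
              have hY0 : (Yser z : ℤ) = 0 := by simp [Yser, hzY]
              rw [hY0]
              ring
            · simp [h]
          rw [Finset.sum_congr rfl hsplit, Finset.sum_sub_distrib]
          have hO : ((Sn (m + 2)).sum fun z => if tle z t then ovf E z else 0) =
              ((Sn (m + 1)).sum fun l => if tle l (removeLast t) then E l else 0) := by
            rw [sum_reindex (g := fun l => node l leaf) (t := Sn (m + 1))
              (hsub := ?_) (hinj := ?_) (hzero := ?_)]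
            · apply Finset.sum_congr rfl
              intro l hl
              rw [ovf_node_leaf]
              by_cases h : tle l (removeLast t)
              · rw [if_pos ((le_node_leaf_iff hne).mpr h), if_pos h]
              · rw [if_neg (fun hc => h ((le_node_leaf_iff hne).mp hc)), if_neg h]
            · intro u hu
              rw [mem_Sn] at hu ⊢
              simp [size, hu]
            · intro u _ v _ h
              injection h
            · intro z hz hni
              cases z with
              | leaf => simp
              | node l r =>
                  cases r with
                  | leaf =>
                      exfalso
                      apply hni l ?_ rfl
                      rw [mem_Sn] at hz ⊢
                      simp only [size] at hz
                      omega
                  | node x y => simp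
          by_cases hLL : lastLeft t = leaf
          · have hU : ((Sn (m + 2)).sum fun z => if tle z t then
                (if lastLeft z = leaf ∧ z ≠ leaf then E (removeLast z) else 0) else 0) =
                ((Sn (m + 1)).sum fun u => if tle u (removeLast t) then E u else 0) := by
              rw [sum_reindex (g := fun u => under u Ysh) (t := Sn (m + 1))
                (hsub := ?_) (hinj := ?_) (hzero := ?_)]
              · apply Finset.sum_congr rfl
                intro u hu
                have hc : lastLeft (under u Ysh) = leaf ∧ under u Ysh ≠ leaf :=
                  ⟨lastLeft_under u, under_ne_leaf u⟩
                rw [if_pos hc, removeLast_under]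
                by_cases h : tle u (removeLast t)
                · rw [if_pos ((le_under_iff hne).mpr ⟨h, hLL⟩), if_pos h]
                · rw [if_neg (fun hc2 => h ((le_under_iff hne).mp hc2).1), if_neg h]
              · intro u hu
                rw [mem_Sn] at hu ⊢
                rw [size_under, hu]
              · intro u _ v _ h
                have h2 := congrArg removeLast h
                rwa [removeLast_under, removeLast_under] at h2
              · intro z hz hni
                by_cases h : lastLeft z = leaf ∧ z ≠ leaf
                · exfalso
                  apply hni (removeLast z) ?_ (under_removeLast z h.2 h.1)
                  rw [mem_Sn] at hz ⊢
                  have := size_removeLast z h.2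
                  omega
                · simp [h]
            rw [hO, hU, sub_self]
            have hnc : t ≠ leftComb (m + 2) := by
              intro h
              have e : lastLeft (leftComb (m + 2)) = leftComb (m + 1) := rfl
              rw [h, e] at hLL
              exact leftComb_ne_leaf m hLL
            rw [if_neg hnc]
          · have hU0 : ((Sn (m + 2)).sum fun z => if tle z t then
                (if lastLeft z = leaf ∧ z ≠ leaf then E (removeLast z) else 0) else 0) = 0 := by
              apply Finset.sum_eq_zero
              intro z hz
              by_cases h1 : tle z t
              · rw [if_pos h1]
                by_cases h2 : lastLeft z = leaf ∧ z ≠ leaf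
                · exact absurd (tle_lastLeft h1 h2.1) hLL
                · rw [if_neg h2]
              · rw [if_neg h1]
            rw [hO, hU0, sub_zero, ih (m + 1) (by omega) (removeLast t) hrl_sz hrl_ne]
            by_cases hrt : removeLast t = leftComb (m + 1)
            · rw [if_pos hrt, if_pos (removeLast_leftComb t hLL (m + 1) hrt)]
            · have hnc : t ≠ leftComb (m + 2) := by
                intro h
                apply hrt
                rw [h]
                rfl
              rw [if_neg hrt, if_neg hnc]

end PBT



open PBT in
open Classical in
/-- let `μ` be the Möbius function of the Tamari order (namely:
`μ t t = 1`, `μ s t = 0` unless `s ≤ t` in the Tamari order, and for `s < t`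
the sum of `μ s z` over the Tamari interval `[s,t]` vanishes). Then the series
`E` defined by `E = Y + E/Y - E∖Y` is `Σ_{n≥1} Σ_{t ∈ Y_n} μ(c_n, t) t`, where
`c_n` is the left comb, the minimum of the Tamari lattice on `Y_n`. -/
theorem tamari_mobius_series (E : PBT → ℤ) (μ : PBT → PBT → ℤ)
    (hE0 : E PBT.leaf = 0)
    (hE : ∀ t : PBT, E t = Yser t + overConv E Yser t - underConv E Yser t)
    (hμrefl : ∀ t : PBT, μ t t = 1)
    (hμnot : ∀ s t : PBT, ¬ tle s t → μ s t = 0)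
    (hμsum : ∀ s t : PBT, s ≠ t → tle s t →
      ((treesOfSize (size t)).map
        (fun z => if tle s z ∧ tle z t then μ s z else 0)).sum = 0) :
    ∀ t : PBT, t ≠ PBT.leaf → E t = μ (leftComb (size t)) t := by
  have key : ∀ k : ℕ, ∀ t : PBT, t ≠ PBT.leaf →
      ((Sn (size t)).filter (fun z => tle z t)).card ≤ k →
      E t = μ (leftComb (size t)) t := by
    intro k
    induction k with
    | zero =>
        intro t ht hc
        exfalso
        have hm : t ∈ (Sn (size t)).filter (fun z => tle z t) :=
          Finset.mem_filter.mpr ⟨mem_Sn.mpr rfl, tle_refl t⟩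
        have := Finset.card_pos.mpr ⟨t, hm⟩
        omega
    | succ k ihk =>
        intro t ht hc
        by_cases hcomb : t = leftComb (size t)
        · obtain ⟨n, hn⟩ : ∃ n, size t = n + 1 := by
            cases hs : size t with
            | zero => exact absurd ((size_eq_zero_iff t).mp hs) ht
            | succ n => exact ⟨n, rfl⟩
          rw [hn] at hcomb
          subst hcomb
          rw [E_leftComb hE0 hE n, size_leftComb, hμrefl]
        · have hle : tle (leftComb (size t)) t := leftComb_le t
          have hne2 : leftComb (size t) ≠ t := fun h => hcomb h.symm
          have hs := hμsum (leftComb (size t)) t hne2 hle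
          have hconv : ((treesOfSize (size t)).map
              (fun z => if tle (leftComb (size t)) z ∧ tle z t
                then μ (leftComb (size t)) z else 0)).sum
              = (Sn (size t)).sum (fun z => if tle (leftComb (size t)) z ∧ tle z t
                then μ (leftComb (size t)) z else 0) := by
            rw [Sn]
            exact (List.sum_toFinset _ (nodup_treesOfSize _)).symm
          rw [hconv] at hs
          have hs2 : (Sn (size t)).sum
              (fun z => if tle z t then μ (leftComb (size t)) z else 0) = 0 := by
            have heq : (Sn (size t)).sum
                (fun z => if tle z t then μ (leftComb (size t)) z else 0) =
                (Sn (size t)).sum (fun z => if tle (leftComb (size t)) z ∧ tle z t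
                  then μ (leftComb (size t)) z else 0) := by
              apply Finset.sum_congr rfl
              intro z hz
              have hzc : tle (leftComb (size t)) z := by
                have := leftComb_le z
                rwa [mem_Sn.mp hz] at this
              by_cases h : tle z t
              · rw [if_pos h, if_pos ⟨hzc, h⟩]
              · rw [if_neg h, if_neg (fun hh => h hh.2)]
            rw [heq, hs]
          have hT := TSum hE0 hE (size t) t rfl ht
          rw [if_neg hcomb] at hT
          have hdiff : ((Sn (size t)).filter (fun z => tle z t)).sum
              (fun z => E z - μ (leftComb (size t)) z) = 0 := by
            rw [Finset.sum_sub_distrib]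
            rw [← Finset.sum_filter] at hT hs2
            rw [hT, hs2, sub_zero]
          have htmem : t ∈ (Sn (size t)).filter (fun z => tle z t) :=
            Finset.mem_filter.mpr ⟨mem_Sn.mpr rfl, tle_refl t⟩
          rw [← Finset.add_sum_erase _ _ htmem] at hdiff
          have herase : (((Sn (size t)).filter (fun z => tle z t)).erase t).sum
              (fun z => E z - μ (leftComb (size t)) z) = 0 := by
            apply Finset.sum_eq_zero
            intro z hz
            have hz1 := Finset.mem_of_mem_erase hz
            have hznet : z ≠ t := Finset.ne_of_mem_erase hz
            obtain ⟨hzS, hzt⟩ := Finset.mem_filter.mp hz1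
            have hzsize : size z = size t := mem_Sn.mp hzS
            have hzne : z ≠ PBT.leaf := by
              intro h
              rw [h] at hzsize
              exact ht ((size_eq_zero_iff t).mp hzsize.symm)
            have hsub : (Sn (size z)).filter (fun w => tle w z) ⊆
                (Sn (size t)).filter (fun w => tle w t) := by
              intro w hw
              obtain ⟨h1, h2⟩ := Finset.mem_filter.mp hw
              refine Finset.mem_filter.mpr ⟨?_, tle_trans h2 hzt⟩
              rw [mem_Sn] at h1 ⊢
              omega
            have hnotmem : t ∉ (Sn (size z)).filter (fun w => tle w z) := by
              intro h
              exact hznet (tle_antisymm hzt (Finset.mem_filter.mp h).2)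
            have hcard : ((Sn (size z)).filter (fun w => tle w z)).card <
                ((Sn (size t)).filter (fun w => tle w t)).card :=
              Finset.card_lt_card
                ((Finset.ssubset_iff_of_subset hsub).mpr ⟨t, htmem, hnotmem⟩)
            have hihz := ihk z hzne (by omega)
            rw [hihz, hzsize, sub_self]
          rw [herase, add_zero] at hdiff
          omega
  intro t ht
  exact key (((Sn (size t)).filter (fun z => tle z t)).card) t ht le_rfl
end
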